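/- If u ∈ 𝒮'(ℝ^d) has compact support, then its Gabor wave front set is contained in {0} × (ℝ^d \ {0}); i.e., if (x₀, ξ₀) ∈ WF_G(u) then x₀ = 0. -/

import Mathlib

open MeasureTheory Complex ComplexConjugate
open scoped InnerProductSpace

noncomputable section

abbrev Ed (d : ℕ) := EuclideanSpace ℝ (Fin d)

/-- Japanese bracket on ℝ^d. -/
def jb {d : ℕ} (x : Ed d) : ℝ := Real.sqrt (1 + ‖x‖ ^ 2)

/-- Japanese bracket on phase space ℝ^{2d}. -/
def jb2 {d : ℕ} (z : Ed d × Ed d) : ℝ := Real.sqrt (1 + ‖z.1‖ ^ 2 + ‖z.2‖ ^ 2)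

/-- A conic subset of phase space. -/
def IsConic {d : ℕ} (Γ : Set (Ed d × Ed d)) : Prop :=
  ∀ z ∈ Γ, ∀ t : ℝ, 0 < t → t • z ∈ Γ

/-- Superpolynomial decay of `V` on `Γ`. -/
def RapidDecayOn {d : ℕ} (V : Ed d × Ed d → ℂ) (Γ : Set (Ed d × Ed d)) : Prop :=
  ∀ N : ℝ, 0 ≤ N → ∃ C : ℝ, ∀ z ∈ Γ, jb2 z ^ N * ‖V z‖ ≤ C

/-- `z₀` is not in the Gabor wave front set measured through the STFT-type
transform `V`: there is an open conic set `Γ ∋ z₀` in `ℝ^{2d} \ {0}` on which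
`V` decays super-polynomially. -/
def NotInWFG {d : ℕ} (V : Ed d × Ed d → ℂ) (z₀ : Ed d × Ed d) : Prop :=
  ∃ Γ : Set (Ed d × Ed d), IsOpen Γ ∧ (∀ z ∈ Γ, z ≠ 0) ∧ IsConic Γ ∧ z₀ ∈ Γ ∧
    RapidDecayOn V Γ

section AuxWFG

open Finset
open scoped ContDiff

universe u

lemma WFGaux.fderiv_comp_sub {E F : Type u} [NormedAddCommGroup E] [NormedSpace ℝ E]
    [NormedAddCommGroup F] [NormedSpace ℝ F]
    (g : E → F) (x y : E) :
    fderiv ℝ (fun z => g (z - x)) y = fderiv ℝ g (y - x) := by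
  by_cases h : DifferentiableAt ℝ g (y - x)
  · have h1 : HasFDerivAt (fun z : E => z - x) (ContinuousLinearMap.id ℝ E) y := by
      simpa using (hasFDerivAt_id y).sub_const x
    have h2 := (h.hasFDerivAt.comp y h1).fderiv
    simpa [Function.comp_def] using h2
  · rw [fderiv_zero_of_not_differentiableAt h, fderiv_zero_of_not_differentiableAt]
    intro hc
    apply h
    have hc' : DifferentiableAt ℝ (fun z => g (z - x)) (y - x + x) := by
      rwa [sub_add_cancel]
    have h3 : DifferentiableAt ℝ ((fun z => g (z - x)) ∘ (fun z : E => z + x)) (y - x) :=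
      hc'.comp (y - x) (by simpa using differentiableAt_id.add_const (𝕜 := ℝ) x)
    have h4 : ((fun z => g (z - x)) ∘ (fun z : E => z + x)) = g := by
      funext z; simp [Function.comp]
    rwa [h4] at h3

lemma WFGaux.iteratedFDeriv_comp_sub {E : Type u} [NormedAddCommGroup E] [NormedSpace ℝ E] :
    ∀ (n : ℕ) {F : Type u} [NormedAddCommGroup F]
    [NormedSpace ℝ F] (g : E → F) (x y : E),
    iteratedFDeriv ℝ n (fun z => g (z - x)) y = iteratedFDeriv ℝ n g (y - x)
  | 0, F, _, _, g, x, y => by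
      ext m
      simp [iteratedFDeriv_zero_apply]
  | (n+1), F, _, _, g, x, y => by
      ext m
      rw [iteratedFDeriv_succ_apply_right, iteratedFDeriv_succ_apply_right]
      have hd : (fderiv ℝ (fun z => g (z - x))) = fun z => fderiv ℝ g (z - x) :=
        funext fun z => WFGaux.fderiv_comp_sub g x z
      simp only [hd]
      rw [WFGaux.iteratedFDeriv_comp_sub n (fderiv ℝ g) x y]

lemma WFGaux.norm_iteratedFDeriv_cexp_le {E : Type*} [NormedAddCommGroup E]
    [NormedSpace ℝ E] (c : E →L[ℝ] ℂ) (hre : ∀ y, (c y).re = 0) :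
    ∀ (n : ℕ) (y : E), ‖iteratedFDeriv ℝ n (fun y => Complex.exp (c y)) y‖ ≤ ‖c‖ ^ n := by
  have hsm : ContDiff ℝ ∞ (fun y : E => Complex.exp (c y)) :=
    (Complex.contDiff_exp (𝕜 := ℝ)).comp c.contDiff
  intro n
  induction n with
  | zero =>
    intro y
    rw [norm_iteratedFDeriv_zero, pow_zero, Complex.norm_exp, hre,
      Real.exp_zero]
  | succ n ih =>
    intro y
    rw [← norm_iteratedFDeriv_fderiv]
    set A : ℂ →L[ℂ] (E →L[ℝ] ℂ) := (ContinuousLinearMap.id ℂ ℂ).smulRight c with hA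
    have hfd : fderiv ℝ (fun y => Complex.exp (c y)) =
        (A.restrictScalars ℝ) ∘ (fun y => Complex.exp (c y)) := by
      funext z
      have h1 : HasFDerivAt (fun y => Complex.exp (c y)) (Complex.exp (c z) • c) z :=
        (c.hasFDerivAt (x := z)).cexp
      rw [h1.fderiv]
      rfl
    rw [hfd]
    have hcomp := (A.restrictScalars ℝ).iteratedFDeriv_comp_left
      (f := fun y => Complex.exp (c y)) (hsm.contDiffAt (x := y)) (i := n) (by exact_mod_cast le_top)
    rw [hcomp]
    have hAn : ‖A.restrictScalars ℝ‖ ≤ ‖c‖ := by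
      rw [ContinuousLinearMap.norm_restrictScalars, hA,
        ContinuousLinearMap.norm_smulRight_apply]
      calc ‖ContinuousLinearMap.id ℂ ℂ‖ * ‖c‖ ≤ 1 * ‖c‖ := by
            gcongr; exact ContinuousLinearMap.norm_id_le
        _ = ‖c‖ := one_mul _
    calc ‖(A.restrictScalars ℝ).compContinuousMultilinearMap
          (iteratedFDeriv ℝ n (fun y => Complex.exp (c y)) y)‖
        ≤ ‖A.restrictScalars ℝ‖ * ‖iteratedFDeriv ℝ n (fun y => Complex.exp (c y)) y‖ :=
          ContinuousLinearMap.norm_compContinuousMultilinearMap_le _ _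
      _ ≤ ‖c‖ * ‖c‖ ^ n := by
          apply mul_le_mul hAn (ih y) (norm_nonneg _) (norm_nonneg _)
      _ = ‖c‖ ^ (n + 1) := (pow_succ' _ _).symm

lemma WFGaux.claimA (d : ℕ) (φ : SchwartzMap (Ed d) ℂ)
    (b : ContDiffBump (0 : Ed d)) (n m : ℕ) :
    ∃ C : ℝ, 0 ≤ C ∧ ∀ (x ξ y : Ed d),
      (1 + ‖y - x‖) ^ m *
        ‖iteratedFDeriv ℝ n (fun z => (conj (φ (z - x)) *
          Complex.exp (-Complex.I * ((⟪z, ξ⟫_ℝ : ℝ) : ℂ))) * ((b z : ℝ) : ℂ)) y‖ ≤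
      C * (1 + ‖ξ‖) ^ n := by
  classical
  have hbc_smooth : ContDiff ℝ ∞ (fun z : Ed d => ((b z : ℝ) : ℂ)) :=
    Complex.ofRealCLM.contDiff.comp b.contDiff
  have hbj : ∀ j : ℕ, ∃ D : ℝ, ∀ y, ‖iteratedFDeriv ℝ j
      (fun z : Ed d => ((b z : ℝ) : ℂ)) y‖ ≤ D := by
    intro j
    have h1 : HasCompactSupport (fun z : Ed d => ((b z : ℝ) : ℂ)) :=
      b.hasCompactSupport.comp_left (g := fun r : ℝ => (r : ℂ)) (by simp)
    exact (h1.iteratedFDeriv j).exists_bound_of_continuous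
      (hbc_smooth.continuous_iteratedFDeriv (by exact_mod_cast le_top))
  choose Db hDb using hbj
  set D : ℝ := ∑ j ∈ Finset.range (n + 1), max (Db j) 0 with hDdef
  have hD0 : 0 ≤ D := Finset.sum_nonneg fun j _ => le_max_right _ _
  have hD : ∀ j, j ≤ n → ∀ y, ‖iteratedFDeriv ℝ j
      (fun z : Ed d => ((b z : ℝ) : ℂ)) y‖ ≤ D := by
    intro j hj y
    refine (hDb j y).trans ((le_max_left _ 0).trans ?_)
    exact Finset.single_le_sum (f := fun j => max (Db j) 0)
      (fun i _ => le_max_right _ _) (Finset.mem_range_succ_iff.2 hj)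
  set S : ℝ := 2 ^ m * (Finset.Iic (m, n)).sup
    (schwartzSeminormFamily ℝ (Ed d) ℂ) φ with hSdef
  have hS0 : 0 ≤ S := mul_nonneg (by positivity) (apply_nonneg _ _)
  have hP_smooth : ∀ x : Ed d,
      ContDiff ℝ ∞ (fun z => conj (φ (z - x))) := by
    intro x
    have h1 : (fun z : Ed d => conj (φ (z - x))) =
        ⇑Complex.conjCLE ∘ (fun z => φ (z - x)) := by
      funext z; simp [Complex.conjCLE_apply]
    rw [h1]
    exact Complex.conjCLE.contDiff.comp ((φ.smooth ⊤).comp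
      (contDiff_id.sub contDiff_const))
  have hφb : ∀ j, j ≤ n → ∀ (x y : Ed d),
      (1 + ‖y - x‖) ^ m * ‖iteratedFDeriv ℝ j (fun z => conj (φ (z - x))) y‖ ≤ S := by
    intro j hj x y
    have h1 : (fun z : Ed d => conj (φ (z - x))) =
        ⇑Complex.conjLIE ∘ (fun z => φ (z - x)) := by
      funext z; simp [Complex.conjLIE_apply]
    have h2 : ‖iteratedFDeriv ℝ j (fun z => conj (φ (z - x))) y‖
        = ‖iteratedFDeriv ℝ j (fun z : Ed d => φ (z - x)) y‖ := by
      rw [h1]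
      exact Complex.conjLIE.norm_iteratedFDeriv_comp_left _ y j
    rw [h2, WFGaux.iteratedFDeriv_comp_sub j (⇑φ) x y, hSdef]
    exact SchwartzMap.one_add_le_sup_seminorm_apply (𝕜 := ℝ) (m := (m, n)) le_rfl hj φ (y - x)
  have hQ_smooth : ∀ ξ : Ed d,
      ContDiff ℝ ∞ (fun z : Ed d =>
        Complex.exp (-Complex.I * ((⟪z, ξ⟫_ℝ : ℝ) : ℂ))) := by
    intro ξ
    have hinner : ContDiff ℝ ∞ (fun z : Ed d => (⟪z, ξ⟫_ℝ : ℝ)) :=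
      contDiff_id.inner ℝ contDiff_const
    exact (Complex.contDiff_exp (𝕜 := ℝ)).comp
      (contDiff_const.mul (Complex.ofRealCLM.contDiff.comp hinner))
  have hexp : ∀ i, i ≤ n → ∀ (ξ y : Ed d),
      ‖iteratedFDeriv ℝ i (fun z : Ed d =>
        Complex.exp (-Complex.I * ((⟪z, ξ⟫_ℝ : ℝ) : ℂ))) y‖ ≤ (1 + ‖ξ‖) ^ n := by
    intro i hi ξ y
    set c : Ed d →L[ℝ] ℂ :=
      (-Complex.I) • (Complex.ofRealCLM.comp (innerSL ℝ ξ)) with hcdef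
    have hcap : ∀ z, c z = -Complex.I * ((⟪z, ξ⟫_ℝ : ℝ) : ℂ) := by
      intro z
      simp only [hcdef, ContinuousLinearMap.smul_apply, ContinuousLinearMap.comp_apply,
        Complex.ofRealCLM_apply, innerSL_apply_apply, smul_eq_mul, real_inner_comm]
    have hfun : (fun z : Ed d =>
        Complex.exp (-Complex.I * ((⟪z, ξ⟫_ℝ : ℝ) : ℂ))) = fun z => Complex.exp (c z) := by
      funext z; rw [hcap]
    have hre : ∀ z, (c z).re = 0 := by
      intro z; rw [hcap]; simp
    have hc : ‖c‖ ≤ ‖ξ‖ := by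
      refine ContinuousLinearMap.opNorm_le_bound _ (norm_nonneg ξ) fun z => ?_
      rw [hcap, norm_mul]
      simp only [norm_neg, Complex.norm_I, one_mul, Complex.norm_real, Real.norm_eq_abs]
      exact (abs_real_inner_le_norm z ξ).trans (le_of_eq (mul_comm _ _))
    rw [hfun]
    calc ‖iteratedFDeriv ℝ i (fun z => Complex.exp (c z)) y‖ ≤ ‖c‖ ^ i :=
          WFGaux.norm_iteratedFDeriv_cexp_le c hre i y
      _ ≤ (1 + ‖ξ‖) ^ i := by
          gcongr
          all_goals first | exact norm_nonneg c | exact hc.trans (by linarith [norm_nonneg ξ])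
      _ ≤ (1 + ‖ξ‖) ^ n := by
          gcongr
          all_goals first | exact hi | linarith [norm_nonneg ξ]
  have hQB_smooth : ∀ ξ : Ed d,
      ContDiff ℝ ∞ (fun z : Ed d =>
        Complex.exp (-Complex.I * ((⟪z, ξ⟫_ℝ : ℝ) : ℂ)) * ((b z : ℝ) : ℂ)) :=
    fun ξ => (hQ_smooth ξ).mul hbc_smooth
  have h23 : ∀ i, i ≤ n → ∀ (ξ y : Ed d),
      ‖iteratedFDeriv ℝ i (fun z : Ed d =>
        Complex.exp (-Complex.I * ((⟪z, ξ⟫_ℝ : ℝ) : ℂ)) * ((b z : ℝ) : ℂ)) y‖ ≤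
      2 ^ n * ((1 + ‖ξ‖) ^ n * D) := by
    intro i hi ξ y
    have key := norm_iteratedFDeriv_mul_le (𝕜 := ℝ) (N := ∞) (hQ_smooth ξ) hbc_smooth y
      (n := i) (by exact_mod_cast le_top)
    refine key.trans ?_
    calc ∑ j ∈ Finset.range (i + 1), (i.choose j : ℝ) *
          ‖iteratedFDeriv ℝ j _ y‖ * ‖iteratedFDeriv ℝ (i - j) _ y‖
        ≤ ∑ j ∈ Finset.range (i + 1), (i.choose j : ℝ) * ((1 + ‖ξ‖) ^ n * D) := by
          refine Finset.sum_le_sum fun j hj => ?_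
          rw [Finset.mem_range, Nat.lt_succ_iff] at hj
          rw [mul_assoc]
          refine mul_le_mul_of_nonneg_left ?_ (by positivity)
          exact mul_le_mul (hexp j (hj.trans hi) ξ y) (hD (i - j) ((Nat.sub_le i j).trans hi) y)
            (norm_nonneg _) (by positivity)
      _ = (2 : ℝ) ^ i * ((1 + ‖ξ‖) ^ n * D) := by
          rw [← Finset.sum_mul]
          congr 1
          exact_mod_cast Nat.sum_range_choose i
      _ ≤ 2 ^ n * ((1 + ‖ξ‖) ^ n * D) := by
          have h2 : (2 : ℝ) ^ i ≤ 2 ^ n := by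
            gcongr
            all_goals first | exact hi | norm_num
          exact mul_le_mul_of_nonneg_right h2 (by positivity)
  refine ⟨2 ^ n * S * (2 ^ n * D), by positivity, fun x ξ y => ?_⟩
  have hfe : (fun z : Ed d => (conj (φ (z - x)) *
      Complex.exp (-Complex.I * ((⟪z, ξ⟫_ℝ : ℝ) : ℂ))) * ((b z : ℝ) : ℂ)) =
      fun z => conj (φ (z - x)) * (Complex.exp (-Complex.I * ((⟪z, ξ⟫_ℝ : ℝ) : ℂ)) *
        ((b z : ℝ) : ℂ)) := by
    funext z; ring
  rw [hfe]
  have key := norm_iteratedFDeriv_mul_le (𝕜 := ℝ) (N := ∞) (hP_smooth x) (hQB_smooth ξ) y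
    (n := n) (by exact_mod_cast le_top)
  calc (1 + ‖y - x‖) ^ m * ‖iteratedFDeriv ℝ n _ y‖
      ≤ (1 + ‖y - x‖) ^ m * ∑ i ∈ Finset.range (n + 1), (n.choose i : ℝ) *
          ‖iteratedFDeriv ℝ i (fun z => conj (φ (z - x))) y‖ *
          ‖iteratedFDeriv ℝ (n - i) (fun z =>
            Complex.exp (-Complex.I * ((⟪z, ξ⟫_ℝ : ℝ) : ℂ)) * ((b z : ℝ) : ℂ)) y‖ := by
        exact mul_le_mul_of_nonneg_left key (by positivity)
    _ = ∑ i ∈ Finset.range (n + 1), (n.choose i : ℝ) *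
          ((1 + ‖y - x‖) ^ m * ‖iteratedFDeriv ℝ i (fun z => conj (φ (z - x))) y‖) *
          ‖iteratedFDeriv ℝ (n - i) (fun z =>
            Complex.exp (-Complex.I * ((⟪z, ξ⟫_ℝ : ℝ) : ℂ)) * ((b z : ℝ) : ℂ)) y‖ := by
        rw [Finset.mul_sum]
        refine Finset.sum_congr rfl fun i _ => by ring
    _ ≤ ∑ i ∈ Finset.range (n + 1), (n.choose i : ℝ) * S * (2 ^ n * ((1 + ‖ξ‖) ^ n * D)) := by
        refine Finset.sum_le_sum fun i hi => ?_
        rw [Finset.mem_range, Nat.lt_succ_iff] at hi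
        refine mul_le_mul (mul_le_mul_of_nonneg_left (hφb i hi x y) (by positivity))
          (h23 (n - i) (Nat.sub_le n i) ξ y) (norm_nonneg _) ?_
        exact mul_nonneg (by positivity) hS0
    _ = (2 : ℝ) ^ n * S * (2 ^ n * ((1 + ‖ξ‖) ^ n * D)) := by
        rw [← Finset.sum_mul, ← Finset.sum_mul]
        congr 2
        exact_mod_cast Nat.sum_range_choose n
    _ = 2 ^ n * S * (2 ^ n * D) * (1 + ‖ξ‖) ^ n := by ring

lemma WFGaux.iteratedFDeriv_eq_zero_of_eventually {d : ℕ} {f : Ed d → ℂ} {y : Ed d}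
    (n : ℕ) (hf : ∀ᶠ z in nhds y, f z = 0) : iteratedFDeriv ℝ n f y = 0 := by
  have h1 : f =ᶠ[nhds y] (fun _ : Ed d => (0 : ℂ)) := hf
  have h2 : iteratedFDeriv ℝ n f y = iteratedFDeriv ℝ n (fun _ : Ed d => (0 : ℂ)) y := by
    rw [← iteratedFDerivWithin_univ, ← iteratedFDerivWithin_univ]
    exact Filter.EventuallyEq.iteratedFDerivWithin_eq
      (h1.filter_mono nhdsWithin_le_nhds) h1.self_of_nhds n
  rw [h2, iteratedFDeriv_zero_fun]
  rfl

end AuxWFG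

set_option maxHeartbeats 1200000 in
/-- The Gabor wave front set of a compactly supported distribution is contained in
`{0} × (ℝ^d \ {0})`: any point with nonzero first coordinate is not in `WF_G(u)`.
Here `W φ x ξ` is the Schwartz window `y ↦ conj(φ(y-x)) e^{-i⟨y,ξ⟩}`, so that
`V_φ u (x,ξ) = u (W φ x ξ)` is the short-time Fourier transform. -/
theorem WFG_of_compact_support_in_zero_section (d : ℕ)
    (u : SchwartzMap (Ed d) ℂ →L[ℝ] ℂ) (R : ℝ) (hR : 0 < R)
    (hsupp : ∀ f : SchwartzMap (Ed d) ℂ, (∀ y : Ed d, ‖y‖ ≤ R → f y = 0) → u f = 0)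
    (φ : SchwartzMap (Ed d) ℂ) (hφ : φ ≠ 0)
    (W : SchwartzMap (Ed d) ℂ → Ed d → Ed d → SchwartzMap (Ed d) ℂ)
    (hW : ∀ (ψ : SchwartzMap (Ed d) ℂ) (x ξ y : Ed d),
      W ψ x ξ y = conj (ψ (y - x)) * Complex.exp (-Complex.I * (⟪y, ξ⟫_ℝ : ℂ))) :
    ∀ z₀ : Ed d × Ed d, z₀.1 ≠ 0 → NotInWFG (fun z => u (W φ z.1 z.2)) z₀ := by
  classical
  intro z₀ hz₀
  -- the bump function
  set b : ContDiffBump (0 : Ed d) := ⟨R, 2 * R, hR, by linarith⟩ with hbdef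
  set β : Ed d → ℂ := fun z => ((b z : ℝ) : ℂ) with hβdef
  have hβsm : ContDiff ℝ (⊤ : ℕ∞) β := Complex.ofRealCLM.contDiff.comp b.contDiff
  have hβbound : ∀ j : ℕ, ∃ D : ℝ, ∀ y, ‖iteratedFDeriv ℝ j β y‖ ≤ D := by
    intro j
    have h1 : HasCompactSupport β :=
      b.hasCompactSupport.comp_left (g := fun r : ℝ => (r : ℂ)) (by simp)
    exact (h1.iteratedFDeriv j).exists_bound_of_continuous
      (hβsm.continuous_iteratedFDeriv (by exact_mod_cast le_top))
  have hβtg : Function.HasTemperateGrowth β := by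
    refine ⟨hβsm, fun j => ?_⟩
    obtain ⟨D, hD⟩ := hβbound j
    exact ⟨0, D, fun x => by simpa using hD x⟩
  set cut : SchwartzMap (Ed d) ℂ →L[ℝ] SchwartzMap (Ed d) ℂ :=
    SchwartzMap.bilinLeftCLM (ContinuousLinearMap.mul ℝ ℂ) hβtg with hcutdef
  have hcut_apply : ∀ (f : SchwartzMap (Ed d) ℂ) (y : Ed d), (cut f) y = f y * β y :=
    fun f y => rfl
  -- replacing W by its cutoff
  have hUW : ∀ x ξ : Ed d, u (W φ x ξ) = u (cut (W φ x ξ)) := by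
    intro x ξ
    have h0 := hsupp (W φ x ξ - cut (W φ x ξ)) ?_
    · rwa [map_sub, sub_eq_zero] at h0
    · intro y hy
      rw [SchwartzMap.sub_apply, hcut_apply]
      have hb1 : b y = 1 := b.one_of_mem_closedBall (by
        simpa [hbdef, Metric.mem_closedBall, dist_zero_right] using hy)
      simp [hβdef, hb1]
  -- continuity bound for u
  have hqc : Continuous ⇑((normSeminorm ℝ ℂ).comp
      (u : SchwartzMap (Ed d) ℂ →ₗ[ℝ] ℂ)) := by
    exact continuous_norm.comp u.continuous
  obtain ⟨s, C₀, hC₀ne, hC₀⟩ := Seminorm.bound_of_continuous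
    (schwartz_withSeminorms ℝ (Ed d) ℂ) _ hqc
  have hubound : ∀ f : SchwartzMap (Ed d) ℂ,
      ‖u f‖ ≤ (C₀ : ℝ) * (s.sup (schwartzSeminormFamily ℝ (Ed d) ℂ)) f := by
    intro f
    have := hC₀ f
    simpa [Seminorm.comp_apply, NNReal.smul_def, smul_eq_mul] using this
  set nmax : ℕ := s.sup (fun kn => kn.2) with hnmaxdef
  -- seminorm claim
  have hB : ∀ k n m : ℕ, ∃ C : ℝ, 0 ≤ C ∧ ∀ x ξ : Ed d,
      (1 + ‖x‖) ^ m * SchwartzMap.seminorm ℝ k n (cut (W φ x ξ)) ≤ C * (1 + ‖ξ‖) ^ n := by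
    intro k n m
    obtain ⟨C, hC0, hC⟩ := WFGaux.claimA d φ b n m
    refine ⟨(1 + 2 * R) ^ (k + m) * C, by positivity, fun x ξ => ?_⟩
    have hP0 : (0 : ℝ) < (1 + ‖x‖) ^ m := by positivity
    have hcoe : ⇑(cut (W φ x ξ)) = fun z => (conj (φ (z - x)) *
        Complex.exp (-Complex.I * ((⟪z, ξ⟫_ℝ : ℝ) : ℂ))) * β z := by
      funext z
      rw [hcut_apply, hW]
    have hsem : SchwartzMap.seminorm ℝ k n (cut (W φ x ξ)) ≤
        (1 + 2 * R) ^ (k + m) * C * (1 + ‖ξ‖) ^ n / (1 + ‖x‖) ^ m := by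
      apply SchwartzMap.seminorm_le_bound ℝ k n _ (by positivity)
      intro y
      rw [hcoe]
      by_cases hy : ‖y‖ ≤ 2 * R
      · have h1 := hC x ξ y
        have hxb : ‖x‖ ≤ ‖y - x‖ + 2 * R := by
          have h5 : ‖y - (y - x)‖ ≤ ‖y‖ + ‖y - x‖ := norm_sub_le y (y - x)
          have h6 : y - (y - x) = x := by abel
          rw [h6] at h5
          linarith
        have h2 : (1 + ‖x‖) ≤ (1 + 2 * R) * (1 + ‖y - x‖) := by
          nlinarith [norm_nonneg (y - x)]
        have h3 : ‖y‖ ^ k ≤ (1 + 2 * R) ^ k :=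
          pow_le_pow_left₀ (norm_nonneg y) (by linarith) k
        rw [le_div_iff₀ hP0]
        have h4 : (1 + ‖x‖) ^ m ≤ (1 + 2 * R) ^ m * (1 + ‖y - x‖) ^ m := by
          rw [← mul_pow]
          exact pow_le_pow_left₀ (by positivity) h2 m
        calc ‖y‖ ^ k * ‖iteratedFDeriv ℝ n _ y‖ * (1 + ‖x‖) ^ m
            ≤ (1 + 2 * R) ^ k * ‖iteratedFDeriv ℝ n _ y‖ *
              ((1 + 2 * R) ^ m * (1 + ‖y - x‖) ^ m) := by
              refine mul_le_mul (mul_le_mul_of_nonneg_right h3 (norm_nonneg _)) h4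
                (by positivity) (by positivity)
          _ = (1 + 2 * R) ^ (k + m) *
              ((1 + ‖y - x‖) ^ m * ‖iteratedFDeriv ℝ n _ y‖) := by
              rw [pow_add]; ring
          _ ≤ (1 + 2 * R) ^ (k + m) * (C * (1 + ‖ξ‖) ^ n) :=
              mul_le_mul_of_nonneg_left h1 (by positivity)
          _ = (1 + 2 * R) ^ (k + m) * C * (1 + ‖ξ‖) ^ n := by ring
      · have hzero : iteratedFDeriv ℝ n (fun z => (conj (φ (z - x)) *
            Complex.exp (-Complex.I * ((⟪z, ξ⟫_ℝ : ℝ) : ℂ))) * β z) y = 0 := by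
          apply WFGaux.iteratedFDeriv_eq_zero_of_eventually
          have hopen : IsOpen {z : Ed d | 2 * R < ‖z‖} :=
            isOpen_lt continuous_const continuous_norm
          refine Filter.eventually_of_mem (hopen.mem_nhds (by simpa using not_le.mp hy))
            fun z hz => ?_
          have hb0 : b z = 0 := b.zero_of_le_dist (by
            simpa [hbdef, dist_zero_right] using (le_of_lt hz))
          simp [hβdef, hb0]
        rw [hzero]
        simp only [norm_zero, mul_zero]
        positivity
    calc (1 + ‖x‖) ^ m * SchwartzMap.seminorm ℝ k n (cut (W φ x ξ))
        ≤ (1 + ‖x‖) ^ m * ((1 + 2 * R) ^ (k + m) * C * (1 + ‖ξ‖) ^ n / (1 + ‖x‖) ^ m) :=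
          mul_le_mul_of_nonneg_left hsem hP0.le
      _ = (1 + 2 * R) ^ (k + m) * C * (1 + ‖ξ‖) ^ n := by
          field_simp
  -- the cone
  have hx₀ : (0 : ℝ) < ‖z₀.1‖ := norm_pos_iff.mpr hz₀
  set K : ℝ := (‖z₀.2‖ + 1) / ‖z₀.1‖ with hKdef
  have hK0 : 0 < K := by positivity
  refine ⟨{z : Ed d × Ed d | ‖z.2‖ < K * ‖z.1‖}, ?_, ?_, ?_, ?_, ?_⟩
  · exact isOpen_lt (continuous_norm.comp continuous_snd)
      ((continuous_const.mul (continuous_norm.comp continuous_fst)))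
  · rintro z hz rfl
    simp only [Set.mem_setOf_eq, Prod.fst_zero, Prod.snd_zero, norm_zero, mul_zero] at hz
    exact lt_irrefl 0 hz
  · intro z hz t ht
    simp only [Set.mem_setOf_eq] at hz ⊢
    have h1 : ‖(t • z).1‖ = t * ‖z.1‖ := by
      simp [Prod.smul_fst, norm_smul, Real.norm_eq_abs, abs_of_pos ht]
    have h2 : ‖(t • z).2‖ = t * ‖z.2‖ := by
      simp [Prod.smul_snd, norm_smul, Real.norm_eq_abs, abs_of_pos ht]
    rw [h1, h2]
    rw [mul_left_comm]
    exact mul_lt_mul_of_pos_left hz ht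
  · simp only [Set.mem_setOf_eq, hKdef]
    rw [div_mul_cancel₀ _ (ne_of_gt hx₀)]
    exact lt_add_one _
  · -- rapid decay
    intro N hN
    set nn : ℕ := ⌈N⌉₊ with hnndef
    -- constants
    have hchoice := fun kn : ℕ × ℕ => hB kn.1 kn.2 (nn + nmax)
    choose Cb hCb0 hCb using hchoice
    set Cmax : ℝ := ∑ kn ∈ s, Cb kn * (1 + K) ^ nmax with hCmaxdef
    have hCmax0 : 0 ≤ Cmax :=
      Finset.sum_nonneg fun kn _ => mul_nonneg (hCb0 kn) (by positivity)
    set κ : ℝ := Real.sqrt (1 + K ^ 2) with hκdef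
    have hκ0 : 0 ≤ κ := Real.sqrt_nonneg _
    refine ⟨κ ^ nn * ((C₀ : ℝ) * Cmax), fun z hz => ?_⟩
    simp only [Set.mem_setOf_eq] at hz
    obtain ⟨x, ξ⟩ := z
    simp only at hz ⊢
    have hξx : ‖ξ‖ ≤ K * ‖x‖ := le_of_lt hz
    have hP1 : (1 : ℝ) ≤ 1 + ‖x‖ := by linarith [norm_nonneg x]
    -- jb2 bounds
    have hjb1 : 1 ≤ jb2 (x, ξ) := by
      rw [jb2]
      calc (1 : ℝ) = Real.sqrt 1 := Real.sqrt_one.symm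
        _ ≤ Real.sqrt (1 + ‖(x, ξ).1‖ ^ 2 + ‖(x, ξ).2‖ ^ 2) := by
            apply Real.sqrt_le_sqrt
            have h1 := sq_nonneg ‖(x, ξ).1‖
            have h2 := sq_nonneg ‖(x, ξ).2‖
            linarith
    have hjble : jb2 (x, ξ) ≤ κ * (1 + ‖x‖) := by
      rw [jb2, hκdef]
      have h1 : 1 + ‖(x, ξ).1‖ ^ 2 + ‖(x, ξ).2‖ ^ 2 ≤ (1 + K ^ 2) * (1 + ‖x‖) ^ 2 := by
        simp only
        nlinarith [norm_nonneg x, norm_nonneg ξ, hξx, hK0.le]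
      calc Real.sqrt (1 + ‖(x, ξ).1‖ ^ 2 + ‖(x, ξ).2‖ ^ 2)
          ≤ Real.sqrt ((1 + K ^ 2) * (1 + ‖x‖) ^ 2) := Real.sqrt_le_sqrt h1
        _ = Real.sqrt (1 + K ^ 2) * Real.sqrt ((1 + ‖x‖) ^ 2) := by
            rw [Real.sqrt_mul (by positivity)]
        _ = Real.sqrt (1 + K ^ 2) * (1 + ‖x‖) := by
            rw [Real.sqrt_sq (by positivity)]
    -- reduce real power to natural power
    have hrpow : jb2 (x, ξ) ^ N ≤ jb2 (x, ξ) ^ (nn : ℕ) := by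
      rw [← Real.rpow_natCast (jb2 (x, ξ)) nn]
      exact Real.rpow_le_rpow_of_exponent_le hjb1 (Nat.le_ceil N)
    have hVnorm : ‖u (W φ x ξ)‖ ≤ (C₀ : ℝ) * (Cmax / (1 + ‖x‖) ^ nn) := by
      rw [hUW x ξ]
      refine (hubound _).trans ?_
      refine mul_le_mul_of_nonneg_left ?_ C₀.2
      refine Seminorm.finset_sup_apply_le (by positivity) fun kn hkn => ?_
      obtain ⟨k, n⟩ := kn
      have hnle : n ≤ nmax := Finset.le_sup (f := fun kn : ℕ × ℕ => kn.2) hkn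
      have h1 := hCb (k, n) x ξ
      have h2 : (1 + ‖ξ‖) ^ n ≤ (1 + K) ^ nmax * (1 + ‖x‖) ^ nmax := by
        have h3 : 1 + ‖ξ‖ ≤ (1 + K) * (1 + ‖x‖) := by nlinarith
        calc (1 + ‖ξ‖) ^ n ≤ ((1 + K) * (1 + ‖x‖)) ^ n :=
              pow_le_pow_left₀ (by linarith [norm_nonneg ξ]) h3 n
          _ ≤ ((1 + K) * (1 + ‖x‖)) ^ nmax := by
              gcongr
              all_goals first | exact hnle | nlinarith [norm_nonneg x, hK0.le]
          _ = (1 + K) ^ nmax * (1 + ‖x‖) ^ nmax := mul_pow _ _ _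
      have h4 : (1 + ‖x‖) ^ (nn + nmax) *
          SchwartzMap.seminorm ℝ k n (cut (W φ x ξ)) ≤
          Cb (k, n) * ((1 + K) ^ nmax * (1 + ‖x‖) ^ nmax) := by
        refine h1.trans ?_
        exact mul_le_mul_of_nonneg_left h2 (hCb0 (k, n))
      -- rearrange and cancel (1+‖x‖)^nmax
      have h5 : SchwartzMap.seminorm ℝ k n (cut (W φ x ξ)) * (1 + ‖x‖) ^ nn ≤
          Cb (k, n) * (1 + K) ^ nmax := by
        have h6 : (0 : ℝ) < (1 + ‖x‖) ^ nmax := by positivity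
        refine le_of_mul_le_mul_right ?_ h6
        calc SchwartzMap.seminorm ℝ k n (cut (W φ x ξ)) * (1 + ‖x‖) ^ nn *
              (1 + ‖x‖) ^ nmax
            = (1 + ‖x‖) ^ (nn + nmax) * SchwartzMap.seminorm ℝ k n (cut (W φ x ξ)) := by
              rw [pow_add]; ring
          _ ≤ Cb (k, n) * ((1 + K) ^ nmax * (1 + ‖x‖) ^ nmax) := h4
          _ = Cb (k, n) * (1 + K) ^ nmax * (1 + ‖x‖) ^ nmax := by ring
      have h7 : Cb (k, n) * (1 + K) ^ nmax ≤ Cmax := by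
        rw [hCmaxdef]
        exact Finset.single_le_sum (f := fun kn => Cb kn * (1 + K) ^ nmax)
          (fun i _ => mul_nonneg (hCb0 i) (by positivity)) hkn
      have h8 : schwartzSeminormFamily ℝ (Ed d) ℂ (k, n) (cut (W φ x ξ)) =
          SchwartzMap.seminorm ℝ k n (cut (W φ x ξ)) := rfl
      rw [h8, le_div_iff₀ (by positivity)]
      exact h5.trans h7
    -- final chain
    calc jb2 (x, ξ) ^ N * ‖u (W φ x ξ)‖
        ≤ jb2 (x, ξ) ^ (nn : ℕ) * ‖u (W φ x ξ)‖ :=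
          mul_le_mul_of_nonneg_right hrpow (norm_nonneg _)
      _ ≤ (κ * (1 + ‖x‖)) ^ nn * ((C₀ : ℝ) * (Cmax / (1 + ‖x‖) ^ nn)) := by
          refine mul_le_mul (pow_le_pow_left₀ (le_trans zero_le_one hjb1) hjble nn) hVnorm
            (norm_nonneg _) (by positivity)
      _ = κ ^ nn * ((C₀ : ℝ) * Cmax) := by
          rw [mul_pow]
          field_simp
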